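/- It suffices to assume divisibility rather than maximality: let G = H × (ℤ/2ℤ)^l with H a finite abelian group, l ∈ ℕ, and let M ∈ ℕ be such that 2^M divides every element of S(H)_even. If x : G → ℤ and the integer group determinant Θ(G)(x) is even, then 2^{M · 2^l} divides Θ(G)(x). -/

import Mathlib

/-- The integer group determinant of `x : G → ℤ`. -/
def intGroupDet (G : Type*) [Group G] [Fintype G] [DecidableEq G] (x : G → ℤ) : ℤ :=
  Matrix.det (Matrix.of fun g h : G => x (g * h⁻¹))

/-- `S(G)`: the set of all integer group determinants of `G`. -/
def detSet (G : Type*) [Group G] [Fintype G] [DecidableEq G] : Set ℤ :=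
  {d : ℤ | ∃ x : G → ℤ, d = intGroupDet G x}

/-- `S(G)_even = S(G) ∩ 2ℤ`. -/
def detSetEven (G : Type*) [Group G] [Fintype G] [DecidableEq G] : Set ℤ :=
  detSet G ∩ {d : ℤ | 2 ∣ d}

lemma intGroupDet_mulEquiv {G G' : Type*} [Group G] [Fintype G] [DecidableEq G]
    [Group G'] [Fintype G'] [DecidableEq G'] (e : G ≃* G') (x : G' → ℤ) :
    intGroupDet G' x = intGroupDet G (fun g => x (e g)) := by
  unfold intGroupDet
  rw [← Matrix.det_submatrix_equiv_self e.toEquiv]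
  congr 1
  ext g h
  simp [Matrix.submatrix_apply]

lemma det_fromBlocks_same {n R : Type*} [CommRing R] [DecidableEq n] [Fintype n]
    (A B : Matrix n n R) :
    (Matrix.fromBlocks A B B A).det = (A + B).det * (A - B).det := by
  have h : Matrix.fromBlocks (1:Matrix n n R) 1 0 1 * Matrix.fromBlocks A B B A *
      Matrix.fromBlocks 1 (-1) 0 1 = Matrix.fromBlocks (A + B) 0 B (A - B) := by
    rw [Matrix.fromBlocks_multiply, Matrix.fromBlocks_multiply]
    simp
    constructor <;> abel
  have := congrArg Matrix.det h
  rwa [Matrix.det_mul, Matrix.det_mul, Matrix.det_fromBlocks_zero₁₂, Matrix.det_fromBlocks_zero₂₁,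
    Matrix.det_fromBlocks_zero₂₁, Matrix.det_one, mul_one, one_mul, mul_one] at this

abbrev C2 := Multiplicative (ZMod 2)

def sumEquivProdC2 (K : Type*) : K ⊕ K ≃ K × C2 where
  toFun := Sum.elim (fun g => (g, Multiplicative.ofAdd 0)) (fun g => (g, Multiplicative.ofAdd 1))
  invFun := fun p => if p.2 = Multiplicative.ofAdd 0 then Sum.inl p.1 else Sum.inr p.1
  left_inv := by rintro (g | g) <;> simp
  right_inv := by
    rintro ⟨g, ε⟩
    have h : ε.toAdd = 0 ∨ ε.toAdd = 1 := by revert ε; decide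
    rcases h with h | h
    · have : ε = Multiplicative.ofAdd 0 := h
      subst this; simp
    · have h0 : ε = Multiplicative.ofAdd 1 := h
      subst h0; simp

lemma intGroupDet_prod_C2 (K : Type*) [Group K] [Fintype K] [DecidableEq K]
    (x : K × C2 → ℤ) :
    intGroupDet (K × C2) x =
      intGroupDet K (fun g => x (g, Multiplicative.ofAdd 0) + x (g, Multiplicative.ofAdd 1)) *
      intGroupDet K (fun g => x (g, Multiplicative.ofAdd 0) - x (g, Multiplicative.ofAdd 1)) := by
  unfold intGroupDet
  rw [← Matrix.det_submatrix_equiv_self (sumEquivProdC2 K)]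
  have hsub : (Matrix.of fun g h : K × C2 => x (g * h⁻¹)).submatrix (sumEquivProdC2 K)
        (sumEquivProdC2 K) =
      Matrix.fromBlocks
        (Matrix.of fun g h : K => x (g * h⁻¹, Multiplicative.ofAdd 0))
        (Matrix.of fun g h : K => x (g * h⁻¹, Multiplicative.ofAdd 1))
        (Matrix.of fun g h : K => x (g * h⁻¹, Multiplicative.ofAdd 1))
        (Matrix.of fun g h : K => x (g * h⁻¹, Multiplicative.ofAdd 0)) := by
    ext i j
    rcases i with i | i <;> rcases j with j | j <;>
      simp [sumEquivProdC2, Prod.mul_def, Matrix.submatrix_apply] <;> congr 1 <;> decide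
  rw [hsub, det_fromBlocks_same]
  congr 1

lemma intGroupDet_cast_congr {K : Type*} [Group K] [Fintype K] [DecidableEq K]
    (y z : K → ℤ) (h : ∀ g, ((y g : ℤ) : ZMod 2) = ((z g : ℤ) : ZMod 2)) :
    ((intGroupDet K y : ℤ) : ZMod 2) = ((intGroupDet K z : ℤ) : ZMod 2) := by
  unfold intGroupDet
  rw [show ((Matrix.det (Matrix.of fun g h : K => y (g * h⁻¹)) : ℤ) : ZMod 2) =
      (Int.castRingHom (ZMod 2)) (Matrix.det (Matrix.of fun g h : K => y (g * h⁻¹))) from rfl,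
    show ((Matrix.det (Matrix.of fun g h : K => z (g * h⁻¹)) : ℤ) : ZMod 2) =
      (Int.castRingHom (ZMod 2)) (Matrix.det (Matrix.of fun g h : K => z (g * h⁻¹))) from rfl,
    RingHom.map_det, RingHom.map_det]
  congr 1
  ext g h'
  simpa using h (g * h'⁻¹)

def piFinSuccAddEquiv (l : ℕ) : (Fin (l + 1) → ZMod 2) ≃+ (ZMod 2 × (Fin l → ZMod 2)) :=
  { (Fin.consEquiv (fun _ : Fin (l + 1) => ZMod 2)).symm with map_add' := fun _ _ => rfl }

def snocMulEquiv (H : Type*) [CommGroup H] (l : ℕ) :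
    ((H × Multiplicative (Fin l → ZMod 2)) × C2) ≃*
      (H × Multiplicative (Fin (l + 1) → ZMod 2)) :=
  (MulEquiv.prodAssoc).trans
    ((MulEquiv.prodCongr (MulEquiv.refl H) (MulEquiv.prodComm)).trans
      (MulEquiv.prodCongr (MulEquiv.refl H)
        (((piFinSuccAddEquiv l).toMultiplicative.trans (MulEquiv.prodMultiplicative (ZMod 2) (Fin l → ZMod 2))).symm)))

/-- Divisibility suffices (no maximality needed): let `G = H × (ℤ/2ℤ)^l` with
`H` a finite abelian group and `M ∈ ℕ` such that `2^M` divides every element of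
`S(H)_even`. If `x : G → ℤ` and `Θ(G)(x)` is even, then
`2^(M · 2^l) ∣ Θ(G)(x)`. -/
theorem pow_two_dvd_intGroupDet_of_even
    (H : Type*) [CommGroup H] [Fintype H] [DecidableEq H] (l : ℕ) (M : ℕ)
    (hM : ∀ d ∈ detSetEven H, (2 : ℤ) ^ M ∣ d)
    (x : H × Multiplicative (Fin l → ZMod 2) → ℤ)
    (heven : 2 ∣ intGroupDet (H × Multiplicative (Fin l → ZMod 2)) x) :
    (2 : ℤ) ^ (M * 2 ^ l) ∣ intGroupDet (H × Multiplicative (Fin l → ZMod 2)) x := by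
  induction l with
  | zero =>
    have e0 : H ≃* H × Multiplicative (Fin 0 → ZMod 2) := (MulEquiv.prodUnique).symm
    rw [intGroupDet_mulEquiv e0 x] at heven ⊢
    simp only [pow_zero, mul_one]
    exact hM _ ⟨⟨_, rfl⟩, heven⟩
  | succ l ih =>
    set K := H × Multiplicative (Fin l → ZMod 2) with hK
    have e := snocMulEquiv H l
    rw [intGroupDet_mulEquiv e (x := x)] at heven ⊢
    set y := fun p : K × C2 => x (e p) with hy
    rw [intGroupDet_prod_C2 K y] at heven ⊢
    set yp := fun g : K => y (g, Multiplicative.ofAdd 0) + y (g, Multiplicative.ofAdd 1) with hyp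
    set ym := fun g : K => y (g, Multiplicative.ofAdd 0) - y (g, Multiplicative.ofAdd 1) with hym
    -- the two factors agree mod 2
    have hcongr : ((intGroupDet K yp : ℤ) : ZMod 2) = ((intGroupDet K ym : ℤ) : ZMod 2) := by
      apply intGroupDet_cast_congr
      intro g
      rw [Int.cast_add, Int.cast_sub, CharTwo.sub_eq_add]
    -- both factors are even
    have hzero : ((intGroupDet K yp : ℤ) : ZMod 2) = 0 := by
      have h2 : (((intGroupDet K yp * intGroupDet K ym : ℤ)) : ZMod 2) = 0 := by
        rw [ZMod.intCast_zmod_eq_zero_iff_dvd]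
        exact_mod_cast heven
      rw [Int.cast_mul, ← hcongr, ← sq] at h2
      exact pow_eq_zero_iff (n := 2) (by norm_num) |>.mp h2
    have hp : (2 : ℤ) ∣ intGroupDet K yp := by
      have := (ZMod.intCast_zmod_eq_zero_iff_dvd (intGroupDet K yp) 2).mp hzero
      exact_mod_cast this
    have hm : (2 : ℤ) ∣ intGroupDet K ym := by
      have := (ZMod.intCast_zmod_eq_zero_iff_dvd (intGroupDet K ym) 2).mp (hcongr ▸ hzero)
      exact_mod_cast this
    have dp := ih yp hp
    have dm := ih ym hm
    have : (2 : ℤ) ^ (M * 2 ^ l) * (2 : ℤ) ^ (M * 2 ^ l) ∣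
        intGroupDet K yp * intGroupDet K ym := mul_dvd_mul dp dm
    rwa [← pow_add, show M * 2 ^ l + M * 2 ^ l = M * 2 ^ (l + 1) by ring] at this
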